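/- arXiv:1404.2741 — 3 statements merged into one kernel-verified Lean document; each statement's English description precedes it below -/
import Mathlib

section
/- Let q be a prime power, let s ≥ 1 and let 1 ≤ t ≤ s. The set of polynomials p ∈ F_q[x_1,…,x_s] such that p(v) = 0 for every v ∈ (F_q)^s of Hamming weight at most t is exactly the ideal of F_q[x_1,…,x_s] generated by {σ_{t+1},…,σ_s} ∪ {x_1^q − x_1,…,x_s^q − x_s} (where for t = s the set of elementary symmetric polynomials taken is empty, so the ideal is generated by the field equations alone). -/
set_option linter.unusedSectionVars false
set_option maxHeartbeats 1000000
set_option synthInstance.maxHeartbeats 400000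

open MvPolynomial Finset

section Aux

variable {K : Type*} [Field K] [Fintype K] [DecidableEq K] {σ : Type*} [Fintype σ] [DecidableEq σ]

local notation "q" => Fintype.card K

noncomputable abbrev fieldEqIdeal (σ K) [Field K] [Fintype K] : Ideal (MvPolynomial σ K) :=
  Ideal.span (Set.range fun i : σ => X i ^ Fintype.card K - X i)

lemma eval_mem_span_zero {S : Set (MvPolynomial σ K)} {v : σ → K}
    (hS : ∀ g ∈ S, eval v g = 0) {p : MvPolynomial σ K} (hp : p ∈ Ideal.span S) :
    eval v p = 0 := by
  refine Submodule.span_induction (fun x hx => hS x hx) (by simp) ?_ ?_ hp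
  · intro x y _ _ hx hy; simp [hx, hy]
  · intro c x _ hx; simp [smul_eq_mul, hx]

lemma eval_fieldEq_zero (v : σ → K) (g : MvPolynomial σ K) (hg : g ∈ fieldEqIdeal σ K) :
    eval v g = 0 := by
  refine eval_mem_span_zero ?_ hg
  rintro _ ⟨i, rfl⟩
  simp [FiniteField.pow_card]

lemma pow_reduce (i : σ) (n : ℕ) :
    ∃ m : ℕ, m ≤ q - 1 ∧ (n = 0 → m = 0) ∧
      (X i : MvPolynomial σ K) ^ n - X i ^ m ∈ fieldEqIdeal σ K := by
  have hq : 2 ≤ q := Fintype.one_lt_card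
  induction n using Nat.strong_induction_on with
  | _ n ih =>
    rcases le_or_gt n (q - 1) with h | h
    · exact ⟨n, h, fun _ => by omega, by simp⟩
    · obtain ⟨m, hm1, _, hm3⟩ := ih (n - (q - 1)) (by omega)
      refine ⟨m, hm1, fun h0 => by omega, ?_⟩
      have key : (X i : MvPolynomial σ K) ^ n - X i ^ (n - (q - 1)) =
          X i ^ (n - q) * (X i ^ q - X i) := by
        rw [mul_sub, ← pow_add, ← pow_succ]
        have e1 : n - q + q = n := by omega
        have e2 : n - q + 1 = n - (q - 1) := by omega
        rw [e1, e2]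
      have hmem : (X i : MvPolynomial σ K) ^ n - X i ^ (n - (q - 1)) ∈ fieldEqIdeal σ K := by
        rw [key]
        exact Ideal.mul_mem_left _ _ (Ideal.subset_span ⟨i, rfl⟩)
      have := Ideal.add_mem _ hmem hm3
      simpa using this

lemma monomial_reduce (a : σ →₀ ℕ) :
    ∃ b : σ →₀ ℕ, (∀ i, b i ≤ q - 1) ∧
      (monomial a (1 : K) - monomial b 1) ∈ fieldEqIdeal σ K := by
  choose m hm1 hm2 hm3 using fun i : σ => pow_reduce (K := K) i (a i)
  refine ⟨Finsupp.onFinset a.support m (fun i hi => by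
      rw [Finsupp.mem_support_iff]; intro h0; exact hi (hm2 i h0)), fun i => hm1 i, ?_⟩
  rw [← Ideal.Quotient.eq]
  have hb : (Finsupp.onFinset a.support m (fun i hi => by
      rw [Finsupp.mem_support_iff]; intro h0; exact hi (hm2 i h0)) : σ →₀ ℕ).support
      ⊆ a.support := Finsupp.support_onFinset_subset
  rw [monomial_eq, monomial_eq, map_one, one_mul, one_mul]
  rw [Finsupp.prod_of_support_subset _ hb (fun i e => (X i : MvPolynomial σ K) ^ e)
      (fun i _ => pow_zero _), Finsupp.prod]
  rw [map_prod, map_prod]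
  refine Finset.prod_congr rfl fun i _ => ?_
  simp only [Finsupp.onFinset_apply]
  exact Ideal.Quotient.eq.mpr (hm3 i)

lemma poly_reduce (p : MvPolynomial σ K) :
    ∃ r ∈ restrictDegree σ K (q - 1), p - r ∈ fieldEqIdeal σ K := by
  choose b hb1 hb2 using fun a : σ →₀ ℕ => monomial_reduce (K := K) a
  refine ⟨∑ a ∈ p.support, monomial (b a) (coeff a p), ?_, ?_⟩
  · refine Submodule.sum_mem _ fun a _ => ?_
    rw [mem_restrictDegree]
    intro s hs i
    have := support_monomial_subset hs
    rw [Finset.mem_singleton] at this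
    subst this
    exact hb1 a i
  · rw [← Ideal.Quotient.eq]
    conv_lhs => rw [p.as_sum]
    rw [map_sum, map_sum]
    refine Finset.sum_congr rfl fun a _ => ?_
    have : (monomial a (coeff a p) : MvPolynomial σ K) - monomial (b a) (coeff a p) ∈
        fieldEqIdeal σ K := by
      have h2 := (fieldEqIdeal σ K).mul_mem_left (C (coeff a p)) (hb2 a)
      rwa [mul_sub, C_mul_monomial, C_mul_monomial, mul_one] at h2
    exact Ideal.Quotient.eq.mpr this

universe uF uS in
lemma restricted_eval_zero {K : Type uF} [Field K] [Fintype K] {σ : Type uS} [Fintype σ]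
    (p : MvPolynomial σ K) (hp : p ∈ restrictDegree σ K (Fintype.card K - 1))
    (h : ∀ v : σ → K, eval v p = 0) : p = 0 := by
  classical
  let φ : K →+* ULift.{uS} K := (ULift.ringEquiv : ULift.{uS} K ≃+* K).symm.toRingHom
  have hφ : Function.Injective φ := (ULift.ringEquiv : ULift.{uS} K ≃+* K).symm.injective
  let e : σ ≃ ULift.{uF} σ := Equiv.ulift.symm
  set p' : MvPolynomial (ULift.{uF} σ) (ULift.{uS} K) := rename e (map φ p) with hp'def
  have key : ∀ (v : σ → K), eval (fun i => φ (v i)) (map φ p) = φ (eval v p) := by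
    intro v
    rw [eval_map]
    rw [show (eval v p) = eval₂ (RingHom.id K) v p from rfl]
    rw [eval₂_comp_left φ (RingHom.id K) v p]
    rfl
  have h' : ∀ w : ULift.{uF} σ → ULift.{uS} K, eval w p' = 0 := by
    intro w
    rw [hp'def, eval_rename]
    have : (w ∘ e) = fun i => φ ((ULift.ringEquiv : ULift.{uS} K ≃+* K) (w (e i))) := by
      funext i; simp [φ]
    rw [this, key, h, map_zero]
  have hp'mem : p' ∈ restrictDegree (ULift.{uF} σ) (ULift.{uS} K)
      (Fintype.card (ULift.{uS} K) - 1) := by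
    rw [mem_restrictDegree]
    intro a ha i
    rw [hp'def] at ha
    rw [support_rename_of_injective e.injective] at ha
    obtain ⟨b, hb, rfl⟩ := Finset.mem_image.mp ha
    have hbp : b ∈ p.support := support_map_subset _ _ hb
    rw [← Finsupp.equivMapDomain_eq_mapDomain, Finsupp.equivMapDomain_apply]
    rw [Fintype.card_ulift]
    rw [mem_restrictDegree] at hp
    exact hp b hbp (e.symm i)
  have : p' = 0 := eq_zero_of_eval_eq_zero _ _ p' h' hp'mem
  have h2 : map φ p = 0 := by
    have := (rename_injective (R := ULift.{uS} K) e e.injective)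
    apply this
    rw [← hp'def] at *
    simpa using ‹p' = 0›
  exact map_injective φ hφ (by simpa using h2)

lemma mem_fieldEqIdeal_of_eval_zero (p : MvPolynomial σ K)
    (h : ∀ v : σ → K, eval v p = 0) : p ∈ fieldEqIdeal σ K := by
  obtain ⟨r, hr1, hr2⟩ := poly_reduce p
  have hr0 : r = 0 := by
    refine restricted_eval_zero r hr1 (fun v => ?_)
    have := eval_fieldEq_zero v _ hr2
    rw [map_sub, sub_eq_zero, h v] at this
    exact this.symm
  rw [hr0, sub_zero] at hr2
  exact hr2

lemma eval_esymm_eq_sum (v : σ → K) (n : ℕ) :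
    eval v (esymm σ K n) = ∑ A ∈ Finset.powersetCard n Finset.univ, ∏ j ∈ A, v j := by
  rw [esymm, map_sum]
  exact Finset.sum_congr rfl fun A _ => by rw [map_prod]; simp

lemma eval_esymm_of_lt (v : σ → K) (n : ℕ) (hn : hammingNorm v < n) :
    eval v (esymm σ K n) = 0 := by
  rw [eval_esymm_eq_sum]
  refine Finset.sum_eq_zero fun A hA => ?_
  rw [Finset.mem_powersetCard_univ] at hA
  have : ¬ A ⊆ ({i | v i ≠ 0} : Finset σ) := by
    intro hsub
    have := Finset.card_le_card hsub
    rw [hA] at this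
    exact absurd (lt_of_lt_of_le hn this) (by simp [hammingNorm])
  obtain ⟨j, hjA, hj⟩ := Finset.not_subset.mp this
  refine Finset.prod_eq_zero hjA ?_
  simpa using hj

lemma eval_esymm_hammingNorm (v : σ → K) :
    eval v (esymm σ K (hammingNorm v)) = ∏ j ∈ ({i | v i ≠ 0} : Finset σ), v j := by
  rw [eval_esymm_eq_sum]
  refine Finset.sum_eq_single ({i | v i ≠ 0} : Finset σ) ?_ ?_
  · intro A hA hne
    rw [Finset.mem_powersetCard_univ] at hA
    have : ¬ A ⊆ ({i | v i ≠ 0} : Finset σ) := by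
      intro hsub
      exact hne (Finset.eq_of_subset_of_card_le hsub (by rw [hA]; simp [hammingNorm]))
    obtain ⟨j, hjA, hj⟩ := Finset.not_subset.mp this
    refine Finset.prod_eq_zero hjA ?_
    simpa using hj
  · intro h
    exact absurd (Finset.mem_powersetCard_univ.mpr (by simp [hammingNorm])) h

lemma eval_esymm_hammingNorm_ne_zero (v : σ → K) :
    eval v (esymm σ K (hammingNorm v)) ≠ 0 := by
  rw [eval_esymm_hammingNorm]
  rw [Finset.prod_ne_zero_iff]
  intro i hi
  simpa using hi

end Aux

/-- Let `q` be a prime power (here a finite field `F` with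
`q = Fintype.card F`), let `s ≥ 1` and `1 ≤ t ≤ s`.  The set of polynomials
`p ∈ F_q[x_1,…,x_s]` vanishing on every `v ∈ (F_q)^s` of Hamming weight at most `t`
is exactly the ideal generated by `{σ_{t+1},…,σ_s}` together with the field
equations `x_i^q − x_i` (for `t = s` the set of elementary symmetric polynomials
taken is empty). -/
theorem stmt1 {F : Type*} [Field F] [Fintype F] [DecidableEq F]
    (s t : ℕ) (hs : 1 ≤ s) (ht1 : 1 ≤ t) (hts : t ≤ s) :
    {p : MvPolynomial (Fin s) F |
        ∀ v : Fin s → F, hammingNorm v ≤ t → MvPolynomial.eval v p = 0} =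
      ↑(Ideal.span
        ((fun i : ℕ => MvPolynomial.esymm (Fin s) F i) '' {i : ℕ | t + 1 ≤ i ∧ i ≤ s} ∪
          Set.range fun i : Fin s =>
            MvPolynomial.X i ^ Fintype.card F - MvPolynomial.X i)) := by
  classical
  set J : Ideal (MvPolynomial (Fin s) F) := Ideal.span
        ((fun i : ℕ => MvPolynomial.esymm (Fin s) F i) '' {i : ℕ | t + 1 ≤ i ∧ i ≤ s} ∪
          Set.range fun i : Fin s =>
            MvPolynomial.X i ^ Fintype.card F - MvPolynomial.X i) with hJ
  have hEJ : fieldEqIdeal (Fin s) F ≤ J := Ideal.span_mono Set.subset_union_right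
  ext p
  simp only [Set.mem_setOf_eq, SetLike.mem_coe]
  constructor
  · -- vanishing ⇒ in ideal
    intro hp
    have hind : ∀ v : Fin s → F, t + 1 ≤ hammingNorm v → indicator v ∈ J := by
      intro v hv
      set n := hammingNorm v with hn
      have hn2 : n ≤ s := by
        simpa using hammingNorm_le_card_fintype (x := v)
      set c := eval v (esymm (Fin s) F n) with hc
      have hcne : c ≠ 0 := eval_esymm_hammingNorm_ne_zero v
      have hE : indicator v * esymm (Fin s) F n - C c * indicator v ∈
          fieldEqIdeal (Fin s) F := by
        apply mem_fieldEqIdeal_of_eval_zero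
        intro w
        by_cases hw : w = v
        · subst hw
          simp [eval_indicator_apply_eq_one, hc, mul_comm]
        · simp [eval_indicator_apply_eq_zero w v hw]
      have hgen : esymm (Fin s) F n ∈ J := Ideal.subset_span (Or.inl ⟨n, ⟨hv, hn2⟩, rfl⟩)
      have h1 : C c * indicator v ∈ J := by
        have h2 := J.mul_mem_left (indicator v) hgen
        have h3 := J.sub_mem h2 (hEJ hE)
        rwa [sub_sub_cancel] at h3
      have h4 := J.mul_mem_left (C c⁻¹) h1
      rwa [← mul_assoc, ← C_mul, inv_mul_cancel₀ hcne, C_1, one_mul] at h4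
    set g : MvPolynomial (Fin s) F := ∑ v : Fin s → F, C (eval v p) * indicator v with hg
    have hgJ : g ∈ J := by
      refine Submodule.sum_mem _ fun v _ => ?_
      by_cases hv : hammingNorm v ≤ t
      · rw [hp v hv, map_zero, zero_mul]; exact J.zero_mem
      · exact J.mul_mem_left _ (hind v (by omega))
    have hpg : p - g ∈ fieldEqIdeal (Fin s) F := by
      apply mem_fieldEqIdeal_of_eval_zero
      intro w
      rw [map_sub, sub_eq_zero, hg, map_sum]
      rw [Finset.sum_eq_single w]
      · simp [eval_indicator_apply_eq_one]
      · intro v _ hvw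
        simp [eval_indicator_apply_eq_zero w v (Ne.symm hvw)]
      · intro h; exact absurd (Finset.mem_univ w) h
    have := J.add_mem (hEJ hpg) hgJ
    rwa [sub_add_cancel] at this
  · -- in ideal ⇒ vanishing
    intro hp v hv
    refine eval_mem_span_zero ?_ hp
    rintro g (⟨i, ⟨hi1, hi2⟩, rfl⟩ | ⟨i, rfl⟩)
    · exact eval_esymm_of_lt v i (by omega)
    · simp [FiniteField.pow_card]
end

section
/- Let f : F_2^n → F_2 be a Boolean function, identified with a function F_2^n → {0,1} ⊂ ℚ. Define the polynomial P ∈ ℚ[a_0,a_1,…,a_n], P = Σ_{v∈{0,1}^{n+1}} c_v a_0^{v_0}a_1^{v_1}···a_n^{v_n}, where c_0 = w(f) (the Hamming weight of f) and, for v = (v_0,v_1,…,v_n) ≠ 0 with ṽ = (v_1,…,v_n), c_v = (−2)^{w(v)} Σ_{u ∈ F_2^n, ṽ ⪯ u} ( f(u) − 1/2 ). Then for every â = (â_0,…,â_n) ∈ {0,1}^{n+1}, P(â) equals the Hamming distance d(f, α_â) between f and the affine Boolean function α_â(x) = â_0 + â_1x_1 + … + â_nx_n (coefficients reduced mod 2).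 -/
open MvPolynomial
open Finset

/-- The affine Boolean function `x ↦ a_0 + a_1 x_1 + … + a_n x_n` determined by the
coefficient vector `a ∈ F_2^{n+1}`. -/
def affineFun (n : ℕ) (a : Fin (n + 1) → ZMod 2) : (Fin n → ZMod 2) → ZMod 2 :=
  fun x => a 0 + ∑ i : Fin n, a i.succ * x i

/-- The coefficient `c_v` of the nonlinearity polynomial, where the `{0,1}`-vector
`v ∈ {0,1}^{n+1}` is encoded by its support `S ⊆ {0,…,n}`:
`c_0 = w(f)` and, for `v ≠ 0` with `ṽ = (v_1,…,v_n)`,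
`c_v = (−2)^{w(v)} Σ_{u ∈ F_2^n, ṽ ⪯ u} (f(u) − 1/2)`. -/
def nlCoeff (n : ℕ) (f : (Fin n → ZMod 2) → ZMod 2) (S : Finset (Fin (n + 1))) : ℚ :=
  if S = ∅ then
    ((Finset.univ.filter fun v : Fin n → ZMod 2 => f v = 1).card : ℚ)
  else
    (-2 : ℚ) ^ S.card *
      ∑ u ∈ Finset.univ.filter
          (fun u : Fin n → ZMod 2 => ∀ i : Fin n, i.succ ∈ S → u i = 1),
        (((f u).val : ℚ) - 1 / 2)

/-- The polynomial `P = Σ_{v ∈ {0,1}^{n+1}} c_v a_0^{v_0} ⋯ a_n^{v_n}`. -/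
noncomputable def nlPoly (n : ℕ) (f : (Fin n → ZMod 2) → ZMod 2) :
    MvPolynomial (Fin (n + 1)) ℚ :=
  ∑ S : Finset (Fin (n + 1)), C (nlCoeff n f S) * ∏ i ∈ S, X i

lemma powerset_sum (ι : Type*) [DecidableEq ι] (T : Finset ι) :
    ∑ S ∈ T.powerset, (-2:ℚ)^S.card = (-1)^T.card := by
  have h := Finset.prod_add (fun _ : ι => (-2:ℚ)) (fun _ => 1) T
  simp at h
  rw [← h]; norm_num

lemma neg_one_pow_eq (m : ℕ) : ((-1:ℚ))^m = 1 - 2 * (((m : ZMod 2)).val : ℚ) := by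
  rw [ZMod.val_natCast]
  rcases Nat.even_or_odd m with h | h
  · rw [h.neg_one_pow, Nat.even_iff.mp h]; norm_num
  · rw [h.neg_one_pow, Nat.odd_iff.mp h]; norm_num

lemma zmod2_cases : ∀ z : ZMod 2, z = 0 ∨ z = 1 := by decide

/-- For every `â ∈ {0,1}^{n+1}`, the value `P(â)` equals the Hamming
distance `d(f, α_â)` between `f` and the affine Boolean function
`α_â(x) = â_0 + â_1 x_1 + … + â_n x_n`. -/
theorem stmt4 (n : ℕ) (f : (Fin n → ZMod 2) → ZMod 2) :
    ∀ a : Fin (n + 1) → ZMod 2,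
      MvPolynomial.eval (fun i => ((a i).val : ℚ)) (nlPoly n f) =
        hammingDist f (affineFun n a) := by
  intro a
  classical
  set T : (Fin n → ZMod 2) → Finset (Fin (n+1)) :=
    fun u => univ.filter (fun j => a j = 1 ∧ (j = 0 ∨ ∃ i : Fin n, i.succ = j ∧ u i = 1))
    with hT
  have hsub : ∀ (S : Finset (Fin (n+1))) (u : Fin n → ZMod 2),
      ((∀ i : Fin n, i.succ ∈ S → u i = 1) ∧ ∀ j ∈ S, a j = 1) ↔ S ⊆ T u := by
    intro S u
    constructor
    · rintro ⟨h1, h2⟩ j hj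
      simp only [hT, mem_filter, mem_univ, true_and]
      refine ⟨h2 j hj, ?_⟩
      rcases Fin.eq_zero_or_eq_succ j with h0 | ⟨i, rfl⟩
      · exact Or.inl h0
      · exact Or.inr ⟨i, rfl, h1 i hj⟩
    · intro hs
      constructor
      · intro i hi
        have := hs hi
        simp only [hT, mem_filter, mem_univ, true_and] at this
        rcases this.2 with h0 | ⟨i', hi', hu⟩
        · exact absurd h0 (Fin.succ_ne_zero i)
        · rwa [← Fin.succ_inj.mp hi']
      · intro j hj
        have := hs hj
        simp only [hT, mem_filter, mem_univ, true_and] at this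
        exact this.1
  have hcardT : ∀ u : Fin n → ZMod 2, (((T u).card : ℕ) : ZMod 2) = affineFun n a u := by
    intro u
    rw [hT]
    rw [Finset.card_filter]
    push_cast
    rw [Fin.sum_univ_succ]
    have h0 : (if a 0 = 1 ∧ ((0 : Fin (n+1)) = 0 ∨ ∃ i : Fin n, i.succ = 0 ∧ u i = 1)
        then (1 : ZMod 2) else 0) = a 0 := by
      rcases zmod2_cases (a 0) with h | h <;> simp [h]
    have hs : ∀ i : Fin n, (if a i.succ = 1 ∧ ((i.succ : Fin (n+1)) = 0 ∨
        ∃ i' : Fin n, i'.succ = i.succ ∧ u i' = 1)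
        then (1 : ZMod 2) else 0) = a i.succ * u i := by
      intro i
      have hne : (i.succ : Fin (n+1)) ≠ 0 := Fin.succ_ne_zero i
      have hiff : ((i.succ : Fin (n+1)) = 0 ∨ ∃ i' : Fin n, i'.succ = i.succ ∧ u i' = 1)
          ↔ u i = 1 := by
        constructor
        · rintro (h | ⟨i', hi', hu⟩)
          · exact absurd h hne
          · rwa [← Fin.succ_inj.mp hi']
        · intro h; exact Or.inr ⟨i, rfl, h⟩
      simp only [hiff]
      rcases zmod2_cases (a i.succ) with h | h <;> rcases zmod2_cases (u i) with h' | h' <;>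
        simp [h, h']
    rw [h0]
    rw [Finset.sum_congr rfl (fun i _ => hs i)]
    rfl
  have key : ∀ u : Fin n → ZMod 2,
      ∑ S ∈ (univ : Finset (Finset (Fin (n+1)))).erase ∅,
        (if S ⊆ T u then (-2:ℚ)^S.card else 0)
      = -2 * (((affineFun n a u).val : ℕ) : ℚ) := by
    intro u
    have h2 : ∑ S : Finset (Fin (n+1)), (if S ⊆ T u then (-2:ℚ)^S.card else 0)
        = (-1:ℚ)^(T u).card := by
      rw [← Finset.sum_filter]
      have : (univ : Finset (Finset (Fin (n+1)))).filter (· ⊆ T u) = (T u).powerset := by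
        ext S; simp [Finset.mem_powerset]
      rw [this, powerset_sum]
    rw [Finset.sum_erase_eq_sub (mem_univ (∅ : Finset (Fin (n+1)))), h2]
    have h4 := neg_one_pow_eq (T u).card
    rw [hcardT u] at h4
    rw [h4]
    simp
  -- expand eval
  rw [nlPoly, map_sum]
  simp only [map_mul, eval_C, map_prod, eval_X]
  rw [← Finset.sum_erase_add (univ : Finset (Finset (Fin (n+1)))) _ (mem_univ ∅)]
  -- empty term
  have hempty : nlCoeff n f ∅ * ∏ i ∈ (∅ : Finset (Fin (n+1))), ((a i).val : ℚ)
      = ∑ u : Fin n → ZMod 2, (((f u).val : ℕ) : ℚ) := by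
    rw [nlCoeff, if_pos rfl]
    simp only [Finset.prod_empty, mul_one]
    rw [Finset.card_filter, Nat.cast_sum]
    refine Finset.sum_congr rfl (fun u _ => ?_)
    rcases zmod2_cases (f u) with h | h <;> simp [h, ZMod.val_one]
  rw [hempty]
  -- nonempty terms
  have hmain : ∑ S ∈ (univ : Finset (Finset (Fin (n+1)))).erase ∅,
      nlCoeff n f S * ∏ i ∈ S, ((a i).val : ℚ)
      = ∑ u : Fin n → ZMod 2,
          ((((f u).val : ℕ) : ℚ) - 1/2) * (-2 * (((affineFun n a u).val : ℕ) : ℚ)) := by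
    have hterm : ∀ S ∈ (univ : Finset (Finset (Fin (n+1)))).erase ∅,
        nlCoeff n f S * ∏ i ∈ S, ((a i).val : ℚ)
        = ∑ u : Fin n → ZMod 2,
            ((((f u).val : ℕ) : ℚ) - 1/2) * (if S ⊆ T u then (-2:ℚ)^S.card else 0) := by
      intro S hS
      have hSne : S ≠ ∅ := Finset.ne_of_mem_erase hS
      rw [nlCoeff, if_neg hSne]
      have hprod : (∏ i ∈ S, ((a i).val : ℚ))
          = if ∀ j ∈ S, a j = 1 then 1 else 0 := by
        split_ifs with h
        · exact Finset.prod_eq_one (fun j hj => by rw [h j hj]; simp [ZMod.val_one])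
        · push_neg at h
          obtain ⟨j, hj, hja⟩ := h
          refine Finset.prod_eq_zero hj ?_
          rcases zmod2_cases (a j) with h' | h'
          · simp [h']
          · exact absurd h' hja
      rw [hprod, Finset.sum_filter, Finset.mul_sum, Finset.sum_mul]
      refine Finset.sum_congr rfl (fun u _ => ?_)
      by_cases h1 : ∀ i : Fin n, i.succ ∈ S → u i = 1 <;>
        by_cases h2 : ∀ j ∈ S, a j = 1
      · rw [if_pos h1, if_pos h2, if_pos ((hsub S u).mp ⟨h1, h2⟩)]; ring
      · rw [if_pos h1, if_neg h2,
          if_neg (fun hc => h2 ((hsub S u).mpr hc).2)]; ring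
      · rw [if_neg h1, if_pos h2,
          if_neg (fun hc => h1 ((hsub S u).mpr hc).1)]; ring
      · rw [if_neg h1, if_neg h2,
          if_neg (fun hc => h1 ((hsub S u).mpr hc).1)]; ring
    rw [Finset.sum_congr rfl hterm, Finset.sum_comm]
    refine Finset.sum_congr rfl (fun u _ => ?_)
    rw [← Finset.mul_sum, key u]
  rw [hmain]
  -- final pointwise identity
  have hpt : ∀ x y : ZMod 2,
      ((x.val : ℕ) : ℚ) + (((x.val : ℕ) : ℚ) - 1/2) * (-2 * ((y.val : ℕ) : ℚ))
      = if x ≠ y then 1 else 0 := by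
    intro x y
    rcases zmod2_cases x with hx | hx <;> rcases zmod2_cases y with hy | hy <;>
      subst hx <;> subst hy <;> norm_num [ZMod.val_one]
  have hdist : ((hammingDist f (affineFun n a) : ℕ) : ℚ)
      = ∑ u : Fin n → ZMod 2, (if f u ≠ affineFun n a u then (1:ℚ) else 0) := by
    rw [hammingDist, Finset.card_filter]
    push_cast
    rfl
  rw [hdist, ← Finset.sum_add_distrib]
  exact Finset.sum_congr rfl (fun u _ => by rw [← hpt (f u) (affineFun n a u)]; ring)
end

section
/- Let f : F_2^n → F_2 be a Boolean function and write its nonlinearity polynomial as 𝔫_f = Σ_{v∈{0,1}^{n+1}} c_v a_0^{v_0}···a_n^{v_n}. Then every coefficient c_v satisfies |c_v| ≤ 2^n. -/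
open Finset MvPolynomial

/-! ### Auxiliary material: the sign function `Eps u = (-1)^u` on `ZMod 2` -/

noncomputable def Eps (u : ZMod 2) : ℚ := 1 - 2 * u.val

lemma Eps_zero : Eps 0 = 1 := by simp [Eps]

lemma Eps_one : Eps 1 = -1 := by rw [Eps, ZMod.val_one]; norm_num

lemma zmod2_cases_s7 (u : ZMod 2) : u = 0 ∨ u = 1 := by fin_cases u <;> [exact Or.inl rfl; exact Or.inr rfl]

lemma Eps_add (u v : ZMod 2) : Eps (u + v) = Eps u * Eps v := by
  rcases zmod2_cases_s7 u with h | h <;> rcases zmod2_cases_s7 v with h' | h' <;> subst h h' <;>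
    simp [Eps_zero, Eps_one, show (1 : ZMod 2) + 1 = 0 from rfl]

lemma Eps_abs (u : ZMod 2) : |Eps u| = 1 := by
  rcases zmod2_cases_s7 u with h | h <;> subst h <;> simp [Eps_zero, Eps_one]

lemma Eps_sum {ι : Type*} (s : Finset ι) (t : ι → ZMod 2) :
    Eps (∑ i ∈ s, t i) = ∏ i ∈ s, Eps (t i) := by
  induction s using Finset.cons_induction with
  | empty => simp [Eps_zero]
  | cons a s ha ih => rw [Finset.sum_cons, Finset.prod_cons, Eps_add, ih]

lemma zmod2_sum (h : ZMod 2 → ℚ) : ∑ b : ZMod 2, h b = h 0 + h 1 := by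
  have : (Finset.univ : Finset (ZMod 2)) = {0, 1} := by decide
  rw [this, Finset.sum_insert (by decide), Finset.sum_singleton]

lemma ite_ne_eq (u v : ZMod 2) :
    (if u ≠ v then (1 : ℚ) else 0) = (1 - Eps u * Eps v) / 2 := by
  rcases zmod2_cases_s7 u with h | h <;> rcases zmod2_cases_s7 v with h' | h' <;> subst h h' <;>
    simp [Eps_zero, Eps_one]

lemma dist_eq {α : Type*} [Fintype α] [DecidableEq α] (f h : α → ZMod 2) :
    (hammingDist f h : ℚ) = ∑ x : α, (1 - Eps (f x) * Eps (h x)) / 2 := by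
  rw [hammingDist, Finset.card_filter]
  push_cast
  exact Finset.sum_congr rfl fun x _ => ite_ne_eq (f x) (h x)

/-! ### Möbius inversion: coefficients of a multilinear polynomial from its values on `{0,1}` -/

lemma eq_of_support_eq {n : ℕ} (b d : Fin (n+1) →₀ ℕ) (hb : ∀ i, b i ≤ 1) (hd : ∀ i, d i ≤ 1)
    (h : b.support = d.support) : b = d := by
  ext i
  rcases Nat.le_one_iff_eq_zero_or_eq_one.mp (hb i) with h1 | h1 <;>
    rcases Nat.le_one_iff_eq_zero_or_eq_one.mp (hd i) with h2 | h2 <;> rw [h1, h2]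
  · exfalso
    have hi : i ∈ d.support := Finsupp.mem_support_iff.mpr (by omega)
    rw [← h] at hi; exact absurd (Finsupp.mem_support_iff.mp hi) (by omega)
  · exfalso
    have hi : i ∈ b.support := Finsupp.mem_support_iff.mpr (by omega)
    rw [h] at hi; exact absurd (Finsupp.mem_support_iff.mp hi) (by omega)

lemma key_sum {n : ℕ} (D : Finset (Fin (n+1))) (A : Finset (Fin (n+1))) :
    (∑ S ∈ D.powerset, (-1:ℚ) ^ ((D \ S).card) * (if A ⊆ S then 1 else 0))
      = if A = D then 1 else 0 := by
  by_cases hAD : A ⊆ D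
  · have hpa := Finset.prod_add (fun _ => (1:ℚ)) (fun j => if j ∈ A then 0 else -1) D
    have hl : ∏ j ∈ D, ((1:ℚ) + if j ∈ A then 0 else -1) = if A = D then 1 else 0 := by
      have : ∀ j ∈ D, ((1:ℚ) + if j ∈ A then 0 else -1) = if j ∈ A then 1 else 0 := by
        intro j _; split_ifs <;> norm_num
      rw [Finset.prod_congr rfl this, Finset.prod_boole]
      congr 1
      simp only [eq_iff_iff]
      constructor
      · intro hDA; exact Finset.Subset.antisymm hAD (fun j hj => hDA j hj)
      · intro h; rw [h]; intro j hj; exact hj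
    have hr : ∀ S ∈ D.powerset,
        (∏ _j ∈ S, (1:ℚ)) * (∏ j ∈ D \ S, (if j ∈ A then (0:ℚ) else -1))
          = (-1:ℚ) ^ ((D \ S).card) * (if A ⊆ S then 1 else 0) := by
      intro S _
      rw [Finset.prod_const_one, one_mul]
      by_cases hAS : A ⊆ S
      · rw [if_pos hAS, mul_one]
        rw [Finset.prod_congr rfl (fun j hj => ?_), Finset.prod_const]
        rw [if_neg]
        intro hjA
        exact (Finset.mem_sdiff.mp hj).2 (hAS hjA)
      · rw [if_neg hAS, mul_zero]
        obtain ⟨j, hjA, hjS⟩ := Finset.not_subset.mp hAS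
        exact Finset.prod_eq_zero (Finset.mem_sdiff.mpr ⟨hAD hjA, hjS⟩) (if_pos hjA)
    rw [← Finset.sum_congr rfl hr, ← hpa, hl]
  · rw [if_neg (fun h : A = D => hAD (le_of_eq h))]
    apply Finset.sum_eq_zero
    intro S hS
    rw [if_neg (fun h => hAD (h.trans (Finset.mem_powerset.mp hS))), mul_zero]

lemma coeff_eq_sum {n : ℕ} (N : MvPolynomial (Fin (n+1)) ℚ)
    (hdeg : ∀ i, N.degreeOf i ≤ 1) (d : Fin (n+1) →₀ ℕ) (hd : ∀ i, d i ≤ 1) :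
    N.coeff d = ∑ S ∈ d.support.powerset,
      (-1 : ℚ) ^ ((d.support \ S).card) *
        MvPolynomial.eval (fun i => if i ∈ S then (1:ℚ) else 0) N := by
  have hmul : ∀ m ∈ N.support, ∀ i, m i ≤ 1 := fun m hm i =>
    MvPolynomial.degreeOf_le_iff.mp (hdeg i) m hm
  have heval : ∀ S : Finset (Fin (n+1)),
      MvPolynomial.eval (fun i => if i ∈ S then (1:ℚ) else 0) N
        = ∑ m ∈ N.support, N.coeff m * (if m.support ⊆ S then 1 else 0) := by
    intro S
    rw [MvPolynomial.eval_eq']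
    refine Finset.sum_congr rfl fun m _ => ?_
    congr 1
    by_cases hsub : m.support ⊆ S
    · rw [if_pos hsub]
      apply Finset.prod_eq_one
      intro i _
      by_cases hi : i ∈ S
      · rw [if_pos hi, one_pow]
      · have : m i = 0 := Finsupp.notMem_support_iff.mp (fun h => hi (hsub h))
        rw [this, pow_zero]
    · rw [if_neg hsub]
      obtain ⟨i, hiM, hiS⟩ := Finset.not_subset.mp hsub
      refine Finset.prod_eq_zero (Finset.mem_univ i) ?_
      rw [if_neg hiS]
      exact zero_pow (Finsupp.mem_support_iff.mp hiM)
  calc N.coeff d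
      = ∑ m ∈ N.support, N.coeff m * (if m.support = d.support then 1 else 0) := by
        rw [Finset.sum_eq_single d]
        · by_cases hds : d ∈ N.support
          · rw [if_pos rfl, mul_one]
          · rw [MvPolynomial.notMem_support_iff.mp hds, zero_mul]
        · intro b hb hbd
          rw [if_neg, mul_zero]
          intro hsup
          exact hbd (eq_of_support_eq b d (hmul b hb) hd hsup)
        · intro hds
          rw [MvPolynomial.notMem_support_iff.mp hds, zero_mul]
    _ = ∑ m ∈ N.support, N.coeff m *
          ∑ S ∈ d.support.powerset, (-1:ℚ) ^ ((d.support \ S).card) *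
            (if m.support ⊆ S then 1 else 0) := by
        refine Finset.sum_congr rfl fun m _ => ?_
        rw [key_sum]
    _ = ∑ S ∈ d.support.powerset, (-1:ℚ) ^ ((d.support \ S).card) *
          MvPolynomial.eval (fun i => if i ∈ S then (1:ℚ) else 0) N := by
        simp_rw [heval, Finset.mul_sum]
        rw [Finset.sum_comm]
        refine Finset.sum_congr rfl fun S _ => ?_
        refine Finset.sum_congr rfl fun m _ => ?_
        ring

/-! ### The Walsh-type product expansion -/

section Main
variable {n : ℕ}

/-- The per-coordinate sign factor. -/
noncomputable def wfun (x : Fin n → ZMod 2) : Fin (n+1) → ℚ :=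
  Fin.cases (-1) (fun i => Eps (x i))

lemma wfun_zero (x : Fin n → ZMod 2) : wfun x 0 = -1 := rfl

lemma wfun_succ (x : Fin n → ZMod 2) (i : Fin n) : wfun x i.succ = Eps (x i) := by
  simp [wfun]

lemma Eps_affine (S : Finset (Fin (n+1))) (x : Fin n → ZMod 2) :
    Eps (affineFun n (fun i => if i ∈ S then 1 else 0) x) = ∏ j ∈ S, wfun x j := by
  rw [affineFun, Eps_add, Eps_sum, ← Fintype.prod_ite_mem S (wfun x), Fin.prod_univ_succ]
  congr 1
  · split_ifs with h
    · rw [Eps_one, wfun_zero]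
    · rw [Eps_zero]
  · refine Finset.prod_congr rfl fun i _ => ?_
    split_ifs with h
    · rw [one_mul, wfun_succ]
    · rw [zero_mul, Eps_zero]

lemma card_fun2 : (Fintype.card (Fin n → ZMod 2)) = 2 ^ n := by simp

lemma P1 (D : Finset (Fin (n+1))) :
    ∑ S ∈ D.powerset, (-1:ℚ) ^ ((D \ S).card) = if D = ∅ then 1 else 0 := by
  have h := Finset.prod_add (fun _ => (1:ℚ)) (fun _ => (-1:ℚ)) D
  simp only [Finset.prod_const, one_pow, one_mul, add_neg_cancel] at h
  rw [← h, zero_pow_eq]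
  simp [Finset.card_eq_zero]

lemma P2 (D : Finset (Fin (n+1))) (x : Fin n → ZMod 2) :
    ∑ S ∈ D.powerset, (-1:ℚ) ^ ((D \ S).card) * ∏ j ∈ S, wfun x j
      = ∏ j ∈ D, (wfun x j - 1) := by
  have h := Finset.prod_add (wfun x) (fun _ => (-1:ℚ)) D
  simp only [Finset.prod_const] at h
  simp_rw [sub_eq_add_neg, h]
  exact Finset.sum_congr rfl fun S _ => mul_comm _ _

lemma prod_abs_bound (D : Finset (Fin (n+1))) :
    ∑ x : Fin n → ZMod 2, ∏ j ∈ D, |wfun x j - 1|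
      = (if (0 : Fin (n+1)) ∈ D then 2 else 1) * 2 ^ n := by
  have hsplit : ∀ x : Fin n → ZMod 2, ∏ j ∈ D, |wfun x j - 1|
      = (if (0 : Fin (n+1)) ∈ D then 2 else 1) *
          ∏ i : Fin n, (if i.succ ∈ D then |Eps (x i) - 1| else 1) := by
    intro x
    rw [← Fintype.prod_ite_mem D (fun j => |wfun x j - 1|), Fin.prod_univ_succ, wfun_zero]
    have h2 : ∀ i : Fin n, (if i.succ ∈ D then |wfun x i.succ - 1| else 1)
        = (if i.succ ∈ D then |Eps (x i) - 1| else 1) := fun i => by rw [wfun_succ]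
    rw [Finset.prod_congr rfl fun i _ => h2 i]
    congr 1
    split_ifs <;> norm_num
  simp_rw [hsplit]
  rw [← Finset.mul_sum]
  congr 1
  rw [← Fintype.prod_sum (fun (i : Fin n) (b : ZMod 2) =>
        if i.succ ∈ D then |Eps b - 1| else 1)]
  have : ∀ i : Fin n, (∑ b : ZMod 2, if i.succ ∈ D then |Eps b - 1| else 1) = 2 := by
    intro i
    rw [zmod2_sum]
    split_ifs <;> norm_num [Eps_zero, Eps_one]
  rw [Finset.prod_congr rfl fun i _ => this i, Finset.prod_const, Finset.card_univ,
    Fintype.card_fin]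

end Main

/-- Every coefficient `c_v` of the nonlinearity polynomial `𝔫_f`
satisfies `|c_v| ≤ 2^n`. -/
theorem stmt7 (n : ℕ) (f : (Fin n → ZMod 2) → ZMod 2)
    (N : MvPolynomial (Fin (n + 1)) ℚ)
    (hdeg : ∀ i : Fin (n + 1), N.degreeOf i ≤ 1)
    (heval : ∀ a : Fin (n + 1) → ZMod 2,
      MvPolynomial.eval (fun i => ((a i).val : ℚ)) N =
        (hammingDist f (affineFun n a) : ℚ)) :
    ∀ d : Fin (n + 1) →₀ ℕ, |N.coeff d| ≤ 2 ^ n := by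
  intro d
  by_cases hd1 : ∀ i, d i ≤ 1
  case neg =>
    push_neg at hd1
    obtain ⟨i, hi⟩ := hd1
    have hns : d ∉ N.support := fun h =>
      absurd (MvPolynomial.degreeOf_le_iff.mp (hdeg i) d h) (by omega)
    rw [MvPolynomial.notMem_support_iff.mp hns, abs_zero]
    positivity
  case pos =>
  have hEvalS : ∀ S : Finset (Fin (n+1)),
      MvPolynomial.eval (fun i => if i ∈ S then (1:ℚ) else 0) N
        = (hammingDist f (affineFun n (fun i => if i ∈ S then 1 else 0)) : ℚ) := by
    intro S
    rw [show (fun i : Fin (n+1) => if i ∈ S then (1:ℚ) else 0)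
        = (fun i => (((if i ∈ S then (1 : ZMod 2) else 0)).val : ℚ)) from
      funext fun i => by split_ifs <;> simp [ZMod.val_one]]
    exact heval _
  set D := d.support with hD
  -- the inner sum over x for a fixed S
  have hterm : ∀ S ∈ D.powerset,
      (-1:ℚ) ^ ((D \ S).card) *
          MvPolynomial.eval (fun i => if i ∈ S then (1:ℚ) else 0) N
        = ((-1:ℚ) ^ ((D \ S).card) * 2 ^ n
            - ∑ x : Fin n → ZMod 2,
                (-1:ℚ) ^ ((D \ S).card) * (Eps (f x) * ∏ j ∈ S, wfun x j)) / 2 := by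
    intro S _
    rw [hEvalS, dist_eq]
    have hx : ∀ x : Fin n → ZMod 2,
        (1 - Eps (f x) * Eps (affineFun n (fun i => if i ∈ S then 1 else 0) x)) / 2
          = (1 - Eps (f x) * ∏ j ∈ S, wfun x j) / 2 := fun x => by rw [Eps_affine]
    rw [Finset.sum_congr rfl fun x _ => hx x, ← Finset.sum_div, Finset.sum_sub_distrib,
      Finset.sum_const, Finset.card_univ, card_fun2, nsmul_eq_mul, mul_one,
      ← Finset.mul_sum]
    push_cast
    ring
  have hmain : N.coeff d = ((if D = ∅ then (1:ℚ) else 0) * 2 ^ n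
      - ∑ x : Fin n → ZMod 2, Eps (f x) * ∏ j ∈ D, (wfun x j - 1)) / 2 := by
    rw [coeff_eq_sum N hdeg d hd1, Finset.sum_congr rfl hterm, ← Finset.sum_div,
      Finset.sum_sub_distrib, ← Finset.sum_mul, P1, Finset.sum_comm]
    congr 2
    refine Finset.sum_congr rfl fun x _ => ?_
    rw [← P2 D x, Finset.mul_sum]
    exact Finset.sum_congr rfl fun S _ => by ring
  have hB : |∑ x : Fin n → ZMod 2, Eps (f x) * ∏ j ∈ D, (wfun x j - 1)|
      ≤ (if (0 : Fin (n+1)) ∈ D then 2 else 1) * 2 ^ n := by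
    calc |∑ x : Fin n → ZMod 2, Eps (f x) * ∏ j ∈ D, (wfun x j - 1)|
        ≤ ∑ x : Fin n → ZMod 2, |Eps (f x) * ∏ j ∈ D, (wfun x j - 1)| :=
          Finset.abs_sum_le_sum_abs _ _
      _ = ∑ x : Fin n → ZMod 2, ∏ j ∈ D, |wfun x j - 1| :=
          Finset.sum_congr rfl fun x _ => by
            rw [abs_mul, Eps_abs, one_mul, Finset.abs_prod]
      _ = _ := prod_abs_bound D
  have hp : (0:ℚ) < 2 ^ n := by positivity
  rw [hmain, abs_div, abs_two, div_le_iff₀ (by norm_num : (0:ℚ) < 2)]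
  set A := (if D = ∅ then (1:ℚ) else 0) * 2 ^ n with hA
  set B := ∑ x : Fin n → ZMod 2, Eps (f x) * ∏ j ∈ D, (wfun x j - 1) with hBdef
  have htri : |A - B| ≤ |A| + |B| := by
    calc |A - B| = |A + -B| := by rw [sub_eq_add_neg]
      _ ≤ |A| + |-B| := abs_add_le _ _
      _ = |A| + |B| := by rw [abs_neg]
  by_cases h0 : (0 : Fin (n+1)) ∈ D
  · have hDne : D ≠ ∅ := Finset.ne_empty_of_mem h0
    rw [if_pos h0] at hB
    have : |A| = 0 := by rw [hA, if_neg hDne, zero_mul, abs_zero]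
    linarith
  · rw [if_neg h0, one_mul] at hB
    have : |A| ≤ 2 ^ n := by
      rw [hA]
      split_ifs
      · rw [one_mul, abs_of_pos hp]
      · rw [zero_mul, abs_zero]; positivity
    linarith
end
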